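/- arXiv:2505.06706 — 2 statements merged into one kernel-verified Lean document; each statement's English description precedes it below -/
import Mathlib

section
/- Let V be a real inner product space, let N be a nonempty finite index set, let a : N → V with mean ã = (1/|N|) · Σ_{k ∈ N} a_k, and let Q : V → ℝ be differentiable with gradient ∇Q that is K-Lipschitz for some K ≥ 0 (i.e., ‖∇Q(x) − ∇Q(y)‖ ≤ K‖x − y‖ for all x, y ∈ V). Then the mean-field aggregation error satisfies | (1/|N|) · Σ_{k ∈ N} Q(a_k) − Q(ã) | ≤ (K/2) · (1/|N|) · Σ_{k ∈ N} ‖a_k − ã‖². -/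
theorem taylor_remainder_bound
    {V : Type*} [NormedAddCommGroup V] [InnerProductSpace ℝ V]
    (Q : V → ℝ) (K : ℝ) (hK : 0 ≤ K)
    (hdiff : Differentiable ℝ Q)
    (hlip : ∀ x y : V, ‖fderiv ℝ Q x - fderiv ℝ Q y‖ ≤ K * ‖x - y‖)
    (x y : V) :
    |Q y - Q x - fderiv ℝ Q x (y - x)| ≤ K / 2 * ‖y - x‖ ^ 2 := by
  set d := y - x with hd
  set g : ℝ → ℝ := fun t => Q (x + t • d) - t * fderiv ℝ Q x d with hg
  set ψ : ℝ → ℝ := fun t => fderiv ℝ Q (x + t • d) d - fderiv ℝ Q x d with hψ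
  have hline : ∀ t : ℝ, HasDerivAt (fun s : ℝ => x + s • d) d t := by
    intro t
    simpa using ((hasDerivAt_id t).smul_const d).const_add x
  have hgd : ∀ t : ℝ, HasDerivAt g (ψ t) t := by
    intro t
    have h1 : HasDerivAt (fun s : ℝ => Q (x + s • d)) (fderiv ℝ Q (x + t • d) d) t :=
      (hdiff (x + t • d)).hasFDerivAt.comp_hasDerivAt t (hline t)
    have h2 : HasDerivAt (fun s : ℝ => s * fderiv ℝ Q x d) (fderiv ℝ Q x d) t := by
      simpa using (hasDerivAt_id t).mul_const (fderiv ℝ Q x d)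
    exact h1.sub h2
  have hψb : ∀ t : ℝ, |ψ t| ≤ K * |t| * ‖d‖ ^ 2 := by
    intro t
    calc |ψ t|
        = ‖(fderiv ℝ Q (x + t • d) - fderiv ℝ Q x) d‖ := by
          simp [hψ, Real.norm_eq_abs]
      _ ≤ ‖fderiv ℝ Q (x + t • d) - fderiv ℝ Q x‖ * ‖d‖ :=
          (fderiv ℝ Q (x + t • d) - fderiv ℝ Q x).le_opNorm d
      _ ≤ K * ‖x + t • d - x‖ * ‖d‖ := by
          gcongr; exact hlip _ _
      _ = K * |t| * ‖d‖ ^ 2 := by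
          simp [norm_smul, Real.norm_eq_abs]; ring
  have key : ∀ (φ χ : ℝ → ℝ), (∀ t, HasDerivAt φ (χ t) t) →
      (∀ t, |χ t| ≤ K * |t| * ‖d‖ ^ 2) → φ 1 - φ 0 ≤ K / 2 * ‖d‖ ^ 2 := by
    intro φ χ hφ hχ
    set h : ℝ → ℝ := fun t => K / 2 * ‖d‖ ^ 2 * t ^ 2 - (φ t - φ 0) with hh
    have hhd : ∀ t : ℝ, HasDerivAt h (K * ‖d‖ ^ 2 * t - χ t) t := by
      intro t
      have h1 : HasDerivAt (fun s : ℝ => K / 2 * ‖d‖ ^ 2 * s ^ 2) (K / 2 * ‖d‖ ^ 2 * (2 * t)) t := by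
        simpa using ((hasDerivAt_pow 2 t).const_mul (K / 2 * ‖d‖ ^ 2))
      have h2 : HasDerivAt (fun s => φ s - φ 0) (χ t) t := (hφ t).sub_const _
      exact (h1.sub h2).congr_deriv (by ring)
    have hmono : MonotoneOn h (Set.Icc 0 1) := by
      apply monotoneOn_of_deriv_nonneg (convex_Icc 0 1)
        ((Differentiable.continuous (fun t => (hhd t).differentiableAt)).continuousOn)
        (fun t ht => ((hhd t).differentiableAt).differentiableWithinAt)
      intro t ht
      rw [(hhd t).deriv]
      have ht' : t ∈ Set.Ioo (0:ℝ) 1 := by simpa using ht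
      have habs : |t| = t := abs_of_pos ht'.1
      have hb := (abs_le.1 (hχ t)).2
      rw [habs] at hb
      nlinarith
    have h01 := hmono (Set.mem_Icc.2 ⟨le_refl 0, zero_le_one⟩)
      (Set.mem_Icc.2 ⟨zero_le_one, le_refl 1⟩) zero_le_one
    simp only [hh] at h01
    nlinarith [h01]
  have hub := key g ψ hgd hψb
  have hlb := key (fun t => -g t) (fun t => -ψ t) (fun t => (hgd t).neg)
    (fun t => by rw [abs_neg]; exact hψb t)
  have hg1 : g 1 = Q y - fderiv ℝ Q x d := by simp [hg, hd]
  have hg0 : g 0 = Q x := by simp [hg]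
  rw [abs_le]
  constructor <;> [skip; skip]
  · have := hlb
    simp only [hg1, hg0] at this
    linarith
  · have := hub
    rw [hg1, hg0] at this
    linarith

/-- For a differentiable `Q` with `K`-Lipschitz derivative, the mean-field
aggregation error is bounded by `(K/2)` times the average squared deviation of
the actions from their mean. -/
theorem mean_field_error_le_smoothness_bound
    {V : Type*} [NormedAddCommGroup V] [InnerProductSpace ℝ V]
    {ι : Type*} (N : Finset ι) (hN : N.Nonempty) (a : ι → V)
    (Q : V → ℝ) (K : ℝ) (hK : 0 ≤ K)
    (hdiff : Differentiable ℝ Q)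
    (hlip : ∀ x y : V, ‖fderiv ℝ Q x - fderiv ℝ Q y‖ ≤ K * ‖x - y‖)
    (atil : V) (hatil : atil = (1 / (N.card : ℝ)) • ∑ k ∈ N, a k) :
    |(1 / (N.card : ℝ)) * (∑ k ∈ N, Q (a k)) - Q atil|
      ≤ (K / 2) * ((1 / (N.card : ℝ)) * ∑ k ∈ N, ‖a k - atil‖ ^ 2) := by
  have hcard : (0:ℝ) < N.card := by exact_mod_cast Finset.card_pos.2 hN
  set n : ℝ := (N.card : ℝ)
  -- sum of deviations is zero
  have hdev : ∑ k ∈ N, (a k - atil) = 0 := by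
    rw [Finset.sum_sub_distrib, Finset.sum_const, hatil,
      ← Nat.cast_smul_eq_nsmul ℝ, smul_smul, mul_one_div, div_self (ne_of_gt hcard),
      one_smul, sub_self]
  have hlin : ∑ k ∈ N, fderiv ℝ Q atil (a k - atil) = 0 := by
    rw [← map_sum, hdev, map_zero]
  have hrewrite : (1 / n) * (∑ k ∈ N, Q (a k)) - Q atil
      = (1 / n) * ∑ k ∈ N, (Q (a k) - Q atil - fderiv ℝ Q atil (a k - atil)) := by
    rw [Finset.sum_sub_distrib, Finset.sum_sub_distrib, hlin, sub_zero,
      Finset.sum_const, mul_sub, nsmul_eq_mul]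
    field_simp
    simp only [n]
    ring
  rw [hrewrite]
  rw [abs_mul, abs_of_pos (by positivity : (0:ℝ) < 1 / n)]
  calc (1 / n) * |∑ k ∈ N, (Q (a k) - Q atil - fderiv ℝ Q atil (a k - atil))|
      ≤ (1 / n) * ∑ k ∈ N, |Q (a k) - Q atil - fderiv ℝ Q atil (a k - atil)| := by
        gcongr; exact Finset.abs_sum_le_sum_abs _ _
    _ ≤ (1 / n) * ∑ k ∈ N, K / 2 * ‖a k - atil‖ ^ 2 := by
        gcongr with k hk
        exact taylor_remainder_bound Q K hK hdiff hlip atil (a k)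
    _ = K / 2 * ((1 / n) * ∑ k ∈ N, ‖a k - atil‖ ^ 2) := by
        rw [← Finset.mul_sum]; ring
end

section
/- (Bi-level mean-field approximation with explicit remainder.) Let V be a real inner product space. Let N be a nonempty finite index set with actions a : N → V, all satisfying ‖a_k‖ ≤ 1, and intra-group mean ã = (1/|N|) · Σ_{k ∈ N} a_k. Let G be a nonempty finite index set with group actions b : G → V, all satisfying ‖b_n‖ ≤ 1, nonnegative weights w : G → ℝ with W = Σ_{n ∈ G} w_n > 0, and inter-group weighted mean b̃ = (1/W) · Σ_{n ∈ G} w_n b_n. Let f, g : V → ℝ be differentiable with K-Lipschitz gradients for some K ≥ 0. Then the bi-level decomposition is approximated by its two mean-field evaluations with total error at most 4K: | [ (1/|N|) · Σ_{k ∈ N} f(a_k) + (1/W) · Σ_{n ∈ G} w_n g(b_n) ] − [ f(ã) + g(b̃) ] | ≤ 4K. -/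
lemma taylor_bound {V : Type*} [NormedAddCommGroup V] [InnerProductSpace ℝ V]
    (f : V → ℝ) (K : ℝ) (hK : 0 ≤ K) (hfdiff : Differentiable ℝ f)
    (hflip : ∀ x y : V, ‖fderiv ℝ f x - fderiv ℝ f y‖ ≤ K * ‖x - y‖)
    (x y : V) : |f y - f x - fderiv ℝ f x (y - x)| ≤ K * ‖y - x‖ ^ 2 := by
  have hconv : Convex ℝ (segment ℝ x y) := convex_segment x y
  have hb : ∀ z ∈ segment ℝ x y, ‖fderiv ℝ f z - fderiv ℝ f x‖ ≤ K * ‖y - x‖ := by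
    intro z hz
    obtain ⟨s, t, hs, ht, hst, rfl⟩ := hz
    refine (hflip _ _).trans ?_
    have : s • x + t • y - x = t • (y - x) := by
      have hs1 : s = 1 - t := by linarith
      rw [hs1]; module
    rw [this, norm_smul]
    have : |t| = t := abs_of_nonneg ht
    rw [Real.norm_eq_abs, this]
    have ht1 : t ≤ 1 := by linarith
    nlinarith [norm_nonneg (y - x), mul_le_mul_of_nonneg_right ht1 (norm_nonneg (y-x))]
  have := hconv.norm_image_sub_le_of_norm_fderiv_le'
    (fun z _ => hfdiff z) hb (left_mem_segment ℝ x y) (right_mem_segment ℝ x y)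
  calc |f y - f x - fderiv ℝ f x (y - x)| ≤ K * ‖y - x‖ * ‖y - x‖ := this
    _ = K * ‖y - x‖ ^ 2 := by ring

lemma avg_bound {V : Type*} [NormedAddCommGroup V] [InnerProductSpace ℝ V]
    {ι : Type*} (S : Finset ι) (c : ι → V) (hc : ∀ i ∈ S, ‖c i‖ ≤ 1)
    (w : ι → ℝ) (hw : ∀ i ∈ S, 0 ≤ w i) (hW : 0 < ∑ i ∈ S, w i)
    (f : V → ℝ) (K : ℝ) (hK : 0 ≤ K) (hfdiff : Differentiable ℝ f)
    (hflip : ∀ x y : V, ‖fderiv ℝ f x - fderiv ℝ f y‖ ≤ K * ‖x - y‖)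
    (m : V) (hm : m = (1 / (∑ i ∈ S, w i)) • ∑ i ∈ S, w i • c i) :
    |(1 / (∑ i ∈ S, w i)) * (∑ i ∈ S, w i * f (c i)) - f m| ≤ K := by
  set W := ∑ i ∈ S, w i with hWdef
  have hW0 : W ≠ 0 := ne_of_gt hW
  have hsum : ∑ i ∈ S, w i • c i = W • m := by
    rw [hm, smul_smul]; field_simp; rw [one_smul]
  set D := fderiv ℝ f m with hD
  have hlin : ∑ i ∈ S, w i * D (c i - m) = 0 := by
    have : ∑ i ∈ S, w i * D (c i - m) = D (∑ i ∈ S, w i • (c i - m)) := by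
      rw [map_sum]
      exact Finset.sum_congr rfl fun i _ => (D.map_smul (w i) (c i - m)).symm
    rw [this]
    have : ∑ i ∈ S, w i • (c i - m) = 0 := by
      simp only [smul_sub, Finset.sum_sub_distrib, hsum, ← Finset.sum_smul, sub_self]
      rw [← hWdef, sub_self]
    rw [this, map_zero]
  have key : (1 / W) * (∑ i ∈ S, w i * f (c i)) - f m
      = (1 / W) * ∑ i ∈ S, w i * (f (c i) - f m - D (c i - m)) := by
    have : ∑ i ∈ S, w i * (f (c i) - f m - D (c i - m))
        = (∑ i ∈ S, w i * f (c i)) - W * f m - ∑ i ∈ S, w i * D (c i - m) := by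
      rw [hWdef]
      simp only [mul_sub, Finset.sum_sub_distrib, Finset.sum_mul]
    rw [this, hlin]
    field_simp
    rw [sub_zero]
  rw [key]
  -- variance bound
  have hvar : ∑ i ∈ S, w i * ‖c i - m‖ ^ 2 ≤ W := by
    have hexp : ∀ i ∈ S, w i * ‖c i - m‖ ^ 2
        = w i * ‖c i‖ ^ 2 - 2 * (w i * inner ℝ (c i) m) + w i * ‖m‖ ^ 2 := by
      intro i _
      rw [@norm_sub_sq_real]; ring
    rw [Finset.sum_congr rfl hexp]
    have hinner : ∑ i ∈ S, w i * inner ℝ (c i) m = W * ‖m‖ ^ 2 := by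
      have : ∑ i ∈ S, w i * inner ℝ (c i) m = inner ℝ (∑ i ∈ S, w i • c i) m := by
        rw [sum_inner]
        exact Finset.sum_congr rfl fun i _ => (real_inner_smul_left (c i) m (w i)).symm
      rw [this, hsum, real_inner_smul_left, real_inner_self_eq_norm_sq]
    rw [Finset.sum_add_distrib, Finset.sum_sub_distrib, ← Finset.mul_sum, hinner, ← Finset.sum_mul]
    have h1 : ∑ i ∈ S, w i * ‖c i‖ ^ 2 ≤ W := by
      rw [hWdef]
      refine Finset.sum_le_sum fun i hi => ?_
      have := hc i hi
      have h2 : ‖c i‖ ^ 2 ≤ 1 := by nlinarith [norm_nonneg (c i)]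
      simpa using mul_le_mul_of_nonneg_left h2 (hw i hi)
    nlinarith [mul_nonneg (le_of_lt hW) (sq_nonneg ‖m‖)]
  have habs : |∑ i ∈ S, w i * (f (c i) - f m - D (c i - m))| ≤ K * W := by
    calc |∑ i ∈ S, w i * (f (c i) - f m - D (c i - m))|
        ≤ ∑ i ∈ S, |w i * (f (c i) - f m - D (c i - m))| := Finset.abs_sum_le_sum_abs _ _
      _ ≤ ∑ i ∈ S, w i * (K * ‖c i - m‖ ^ 2) := by
          refine Finset.sum_le_sum fun i hi => ?_
          rw [abs_mul, abs_of_nonneg (hw i hi)]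
          exact mul_le_mul_of_nonneg_left
            (taylor_bound f K hK hfdiff hflip m (c i)) (hw i hi)
      _ = K * ∑ i ∈ S, w i * ‖c i - m‖ ^ 2 := by
          rw [Finset.mul_sum]; exact Finset.sum_congr rfl fun i _ => by ring
      _ ≤ K * W := by exact mul_le_mul_of_nonneg_left hvar hK
  rw [abs_mul, abs_of_nonneg (by positivity : (0:ℝ) ≤ 1 / W)]
  calc 1 / W * |∑ i ∈ S, w i * (f (c i) - f m - D (c i - m))|
      ≤ 1 / W * (K * W) := by
        exact mul_le_mul_of_nonneg_left habs (by positivity)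
    _ = K := by field_simp

/-- Bi-level mean-field approximation with explicit remainder: for `K`-smooth
`f` and `g` and actions in the unit ball, the bi-level decomposition is
approximated by its two mean-field evaluations with total error at most `4K`. -/
theorem bilevel_mean_field_error_le_four_K
    {V : Type*} [NormedAddCommGroup V] [InnerProductSpace ℝ V]
    {ι κ : Type*} (N : Finset ι) (hN : N.Nonempty) (a : ι → V)
    (ha : ∀ k ∈ N, ‖a k‖ ≤ 1)
    (G : Finset κ) (hG : G.Nonempty) (b : κ → V)
    (hb : ∀ n ∈ G, ‖b n‖ ≤ 1)
    (w : κ → ℝ) (hw : ∀ n ∈ G, 0 ≤ w n) (hW : 0 < ∑ n ∈ G, w n)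
    (f g : V → ℝ) (K : ℝ) (hK : 0 ≤ K)
    (hfdiff : Differentiable ℝ f)
    (hflip : ∀ x y : V, ‖fderiv ℝ f x - fderiv ℝ f y‖ ≤ K * ‖x - y‖)
    (hgdiff : Differentiable ℝ g)
    (hglip : ∀ x y : V, ‖fderiv ℝ g x - fderiv ℝ g y‖ ≤ K * ‖x - y‖)
    (atil : V) (hatil : atil = (1 / (N.card : ℝ)) • ∑ k ∈ N, a k)
    (btil : V) (hbtil : btil = (1 / (∑ n ∈ G, w n)) • ∑ n ∈ G, w n • b n) :
    |((1 / (N.card : ℝ)) * (∑ k ∈ N, f (a k))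
        + (1 / (∑ n ∈ G, w n)) * (∑ n ∈ G, w n * g (b n)))
      - (f atil + g btil)| ≤ 4 * K := by
  have hcard : (∑ _k ∈ N, (1 : ℝ)) = (N.card : ℝ) := by simp
  have hcpos : (0 : ℝ) < ∑ _k ∈ N, (1 : ℝ) := by
    rw [hcard]; exact_mod_cast hN.card_pos
  have h1 : |(1 / (N.card : ℝ)) * (∑ k ∈ N, f (a k)) - f atil| ≤ K := by
    have := avg_bound N a ha (fun _ => (1 : ℝ)) (fun _ _ => zero_le_one) hcpos
      f K hK hfdiff hflip atil (by rw [hcard]; simpa using hatil)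
    simpa [hcard] using this
  have h2 : |(1 / (∑ n ∈ G, w n)) * (∑ n ∈ G, w n * g (b n)) - g btil| ≤ K :=
    avg_bound G b hb w hw hW g K hK hgdiff hglip btil hbtil
  calc |((1 / (N.card : ℝ)) * (∑ k ∈ N, f (a k))
        + (1 / (∑ n ∈ G, w n)) * (∑ n ∈ G, w n * g (b n))) - (f atil + g btil)|
      = |((1 / (N.card : ℝ)) * (∑ k ∈ N, f (a k)) - f atil)
        + ((1 / (∑ n ∈ G, w n)) * (∑ n ∈ G, w n * g (b n)) - g btil)| := by ring_nf
    _ ≤ _ + _ := abs_add_le _ _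
    _ ≤ K + K := add_le_add h1 h2
    _ ≤ 4 * K := by linarith
end
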